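/- For any profinite space S, the abelian group C(S, ℤ) of continuous maps from S to the discrete group ℤ is a free abelian group. -/
import Mathlib

/-- **Nöbeling's theorem.** For any profinite space `S`, the abelian group `C(S, ℤ)` of
continuous maps from `S` to the discrete group `ℤ` is a free abelian group
(i.e. free as a `ℤ`-module). -/
theorem stmt0 (S : Profinite.{u}) : Module.Free ℤ C(S, ℤ) := by
  let e : LocallyConstant S ℤ ≃ₗ[ℤ] C(S, ℤ) :=
    { toFun := fun f => f.toContinuousMap
      invFun := fun f => ⟨f, (IsLocallyConstant.iff_continuous f).mpr f.continuous⟩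
      left_inv := fun f => rfl
      right_inv := fun f => rfl
      map_add' := fun f g => rfl
      map_smul' := fun c f => rfl }
  exact Module.Free.of_equiv e
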